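/- Let $\mathsf{C}$ be a positive-definite $d\times d$ matrix, $L>0$, $\mu = \mathcal{N}(0, \mathsf{C}(I_d + L\mathsf{C})^{-1})$, and $\pi(dx)\propto\mathcal{N}(dx;0,\mathsf{C})\exp(-\Psi(x))$ with $\Psi$ convex, $L$-smooth and minimized at $0$ with $\Psi(0)=0$. Then $\frac{d\mu}{d\pi}(x)\le\det(I_d+L\mathsf{C})^{1/2}\le\exp(\frac{1}{2}L\,\mathrm{Tr}(\mathsf{C}))$ for all $x$. -/

import Mathlib

open MeasureTheory Real
open scoped ENNReal RealInnerProductSpace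

noncomputable section

abbrev Evec (d : ℕ) := EuclideanSpace ℝ (Fin d)

/-- The density of the Gaussian `𝒩(m, C)` with covariance matrix `C` at `x`. -/
def gaussDensityC {d : ℕ} (C : Matrix (Fin d) (Fin d) ℝ) (m x : Evec d) : ℝ :=
  (2 * π) ^ (-(d : ℝ) / 2) * C.det ^ (-(1 : ℝ) / 2) *
    Real.exp (-⟪x - m, Matrix.toEuclideanLin C⁻¹ (x - m)⟫ / 2)

lemma smul_posDef {d : ℕ} {C : Matrix (Fin d) (Fin d) ℝ} (hC : C.PosDef) {L : ℝ} (hL : 0 < L) :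
    (L • C).PosDef := by
  constructor
  · rw [Matrix.IsHermitian, Matrix.conjTranspose_smul, star_trivial, hC.1.eq]
  · exact (hC.smul hL).2

lemma trace_eq_sum_eig {d : ℕ} (A : Matrix (Fin d) (Fin d) ℝ) (hA : A.IsHermitian) :
    A.trace = ∑ i, hA.eigenvalues i := by
  simpa using hA.trace_eq_sum_eigenvalues

lemma quadform_eig {d : ℕ} (A : Matrix (Fin d) (Fin d) ℝ) (hA : A.IsHermitian) (x : Evec d) :
    ⟪x, Matrix.toEuclideanLin A x⟫ = ∑ i, hA.eigenvalues i * (hA.eigenvectorBasis.repr x i)^2 := by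
  set b := hA.eigenvectorBasis
  have hb : ∀ i, Matrix.toEuclideanLin A (b i) = hA.eigenvalues i • b i := by
    intro i; ext j
    have := congrFun (hA.mulVec_eigenvectorBasis i) j
    simpa [Matrix.toEuclideanLin_apply] using this
  conv_lhs => rw [← b.sum_repr x]
  rw [map_sum, inner_sum]
  simp_rw [_root_.map_smul (Matrix.toEuclideanLin A), hb, smul_smul, real_inner_smul_right]
  congr 1; ext i
  have h1 : ⟪∑ j, b.repr x j • b j, b i⟫ = b.repr x i := by
    rw [b.sum_repr x, real_inner_comm, ← b.repr_apply_apply]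
  rw [h1]; ring

lemma integrable_gauss_quad {d : ℕ} (A : Matrix (Fin d) (Fin d) ℝ) (hA : A.PosDef) :
    Integrable (fun x : Evec d => Real.exp (-⟪x, Matrix.toEuclideanLin A x⟫ / 2)) := by
  set b := hA.1.eigenvectorBasis
  set G : Evec d → ℝ := fun y => Real.exp (-(∑ i, hA.1.eigenvalues i * (y i)^2) / 2) with hG
  have hFG : (fun x : Evec d => Real.exp (-⟪x, Matrix.toEuclideanLin A x⟫ / 2)) = G ∘ b.repr := by
    funext x; simp only [hG, Function.comp_apply, quadform_eig A hA.1 x]; rfl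
  rw [hFG, b.measurePreserving_repr.integrable_comp_emb
    b.repr.toHomeomorph.measurableEmbedding]
  rw [← (PiLp.volume_preserving_toLp (Fin d)).integrable_comp_emb
    (MeasurableEquiv.toLp 2 (Fin d → ℝ)).measurableEmbedding]
  have : (G ∘ WithLp.toLp 2) =
      fun v : Fin d → ℝ => ∏ i, Real.exp (-(hA.1.eigenvalues i / 2) * (v i)^2) := by
    funext v
    simp only [Function.comp_apply, hG, ← Real.exp_sum]
    congr 1
    rw [neg_div, Finset.sum_div, ← Finset.sum_neg_distrib]
    refine Finset.sum_congr rfl fun i _ => ?_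
    have : (WithLp.toLp 2 v) i = v i := rfl
    ring
  rw [this]
  exact Integrable.fintype_prod fun i =>
    integrable_exp_neg_mul_sq (by linarith [hA.eigenvalues_pos i])

lemma integral_gauss_quad {d : ℕ} (A : Matrix (Fin d) (Fin d) ℝ) (hA : A.PosDef) :
    ∫ x : Evec d, Real.exp (-⟪x, Matrix.toEuclideanLin A x⟫ / 2)
      = (2 * π) ^ ((d : ℝ) / 2) * A.det ^ (-(1 : ℝ) / 2) := by
  set b := hA.1.eigenvectorBasis
  set G : Evec d → ℝ := fun y => Real.exp (-(∑ i, hA.1.eigenvalues i * (y i)^2) / 2) with hG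
  have hFG : ∀ x : Evec d, Real.exp (-⟪x, Matrix.toEuclideanLin A x⟫ / 2) = G (b.repr x) := by
    intro x; simp only [hG, quadform_eig A hA.1 x]; rfl
  simp_rw [hFG]
  rw [b.measurePreserving_repr.integral_comp b.repr.toHomeomorph.measurableEmbedding]
  rw [← (PiLp.volume_preserving_toLp (Fin d)).integral_comp
    (MeasurableEquiv.toLp 2 (Fin d → ℝ)).measurableEmbedding]
  have hGv : ∀ v : Fin d → ℝ, G (WithLp.toLp 2 v) =
      ∏ i, Real.exp (-(hA.1.eigenvalues i / 2) * (v i)^2) := by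
    intro v
    simp only [hG, ← Real.exp_sum]
    congr 1
    rw [neg_div, Finset.sum_div, ← Finset.sum_neg_distrib]
    refine Finset.sum_congr rfl fun i _ => ?_
    have : (WithLp.toLp 2 v) i = v i := rfl
    ring
  simp_rw [hGv]
  rw [volume_pi, integral_fintype_prod_eq_prod
    (f := fun i (t : ℝ) => Real.exp (-(hA.1.eigenvalues i / 2) * t^2))]
  have hμ : ∀ i, 0 < hA.1.eigenvalues i := hA.eigenvalues_pos
  have key : ∀ i, (∫ t : ℝ, Real.exp (-(hA.1.eigenvalues i / 2) * t^2))
      = (2*π) ^ ((1:ℝ)/2) * (hA.1.eigenvalues i) ^ (-(1:ℝ)/2) := by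
    intro i
    rw [integral_gaussian]
    have h2 : π / (hA.1.eigenvalues i / 2) = (2*π) * (hA.1.eigenvalues i)⁻¹ := by
      field_simp
    rw [h2, Real.sqrt_eq_rpow, Real.mul_rpow (by positivity) (inv_nonneg.mpr (hμ i).le),
      Real.inv_rpow (hμ i).le, ← Real.rpow_neg (hμ i).le]
    norm_num
  simp_rw [key]
  rw [Finset.prod_mul_distrib, Finset.prod_const,
    Real.finset_prod_rpow _ _ (fun i _ => (hμ i).le) _]
  have hdet : A.det = ∏ i, hA.1.eigenvalues i := by
    simpa using hA.1.det_eq_prod_eigenvalues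
  rw [← hdet, Finset.card_univ, Fintype.card_fin,
    ← Real.rpow_natCast ((2*π) ^ ((1:ℝ)/2)) d, ← Real.rpow_mul (by positivity)]
  congr 2
  ring

lemma inv_rpow_neg_half {t : ℝ} (ht : 0 < t) : t⁻¹ ^ (-(1:ℝ)/2) = t ^ ((1:ℝ)/2) := by
  rw [Real.inv_rpow ht.le, ← Real.rpow_neg ht.le, neg_div, neg_neg]

/-- The feasible warm start `μ = 𝒩(0, C(I+LC)⁻¹)` for pCN: the density ratio `dμ/dπ`
with `π ∝ 𝒩(0,C)e^{-Ψ}` is bounded by `det(I+LC)^{1/2} ≤ exp(L·Tr(C)/2)`. -/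
theorem stmt19 {d : ℕ} (C : Matrix (Fin d) (Fin d) ℝ) (hC : C.PosDef)
    (L : ℝ) (hL : 0 < L)
    (Ψ : Evec d → ℝ) (hΨconv : ConvexOn ℝ Set.univ Ψ) (hΨdiff : Differentiable ℝ Ψ)
    (hsmooth : ∀ x h : Evec d, Ψ (x + h) - Ψ x - ⟪gradient Ψ x, h⟫ ≤ L / 2 * ‖h‖ ^ 2)
    (hmin : ∀ x, Ψ 0 ≤ Ψ x) (hΨ0 : Ψ 0 = 0)
    (Z : ℝ) (hZ : Z = ∫ x, gaussDensityC C 0 x * Real.exp (-Ψ x))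
    (x : Evec d) :
    gaussDensityC (C * (1 + L • C)⁻¹) 0 x /
        (Z⁻¹ * (gaussDensityC C 0 x * Real.exp (-Ψ x))) ≤
      (1 + L • C).det ^ ((1 : ℝ) / 2) ∧
    (1 + L • C).det ^ ((1 : ℝ) / 2) ≤ Real.exp ((1 / 2) * L * C.trace) := by
  set M : Matrix (Fin d) (Fin d) ℝ := 1 + L • C with hMdef
  have hM : M.PosDef := Matrix.PosDef.add_posSemidef Matrix.PosDef.one
    (smul_posDef hC hL).posSemidef
  have hdetM : 0 < M.det := hM.det_pos
  have hdetC : 0 < C.det := hC.det_pos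
  -- second inequality
  have hpart2 : M.det ^ ((1 : ℝ) / 2) ≤ Real.exp ((1 / 2) * L * C.trace) := by
    have hν : ∀ i, 0 < hM.1.eigenvalues i := hM.eigenvalues_pos
    have hMdet2 : M.det = ∏ i, hM.1.eigenvalues i := by
      simpa using hM.1.det_eq_prod_eigenvalues
    have htr : M.trace = ∑ i, hM.1.eigenvalues i := trace_eq_sum_eig M hM.1
    have htr2 : M.trace = (d : ℝ) + L * C.trace := by
      rw [hMdef, Matrix.trace_add, Matrix.trace_one, Matrix.trace_smul, smul_eq_mul]
      simp
    have hdetexp : M.det ≤ Real.exp (L * C.trace) := by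
      calc M.det = ∏ i, hM.1.eigenvalues i := hMdet2
        _ ≤ ∏ i, Real.exp (hM.1.eigenvalues i - 1) := by
            refine Finset.prod_le_prod (fun i _ => (hν i).le) (fun i _ => ?_)
            have := Real.add_one_le_exp (hM.1.eigenvalues i - 1)
            linarith
        _ = Real.exp (∑ i, (hM.1.eigenvalues i - 1)) := (Real.exp_sum _ _).symm
        _ = Real.exp (L * C.trace) := by
            congr 1
            rw [Finset.sum_sub_distrib, ← htr, htr2]
            simp
    calc M.det ^ ((1 : ℝ) / 2) ≤ (Real.exp (L * C.trace)) ^ ((1 : ℝ) / 2) :=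
          Real.rpow_le_rpow hdetM.le hdetexp (by norm_num)
      _ = Real.exp ((1 / 2) * L * C.trace) := by
          rw [Real.rpow_def_of_pos (Real.exp_pos _), Real.log_exp]
          congr 1; ring
  refine ⟨?_, hpart2⟩
  -- gradient at 0 vanishes
  have hgrad : gradient Ψ 0 = 0 := by
    have hloc : IsLocalMin Ψ 0 := Filter.Eventually.of_forall fun y => hmin y
    rw [gradient, hloc.fderiv_eq_zero, map_zero]
  have hΨnn : ∀ y, 0 ≤ Ψ y := fun y => hΨ0 ▸ hmin y
  have hΨle : ∀ y : Evec d, Ψ y ≤ L / 2 * ‖y‖ ^ 2 := by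
    intro y
    have := hsmooth 0 y
    rwa [zero_add, hΨ0, hgrad, inner_zero_left, sub_zero, sub_zero] at this
  -- Gaussian density facts
  have hgC : ∀ y : Evec d, gaussDensityC C 0 y =
      (2 * π) ^ (-(d : ℝ) / 2) * C.det ^ (-(1 : ℝ) / 2) *
        Real.exp (-⟪y, Matrix.toEuclideanLin C⁻¹ y⟫ / 2) := by
    intro y; simp [gaussDensityC]
  have hgCpos : ∀ y : Evec d, 0 < gaussDensityC C 0 y := by
    intro y; rw [hgC y]
    have h1 : (0:ℝ) < (2 * π) ^ (-(d : ℝ) / 2) := Real.rpow_pos_of_pos (by positivity) _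
    have h2 : (0:ℝ) < C.det ^ (-(1 : ℝ) / 2) := Real.rpow_pos_of_pos hdetC _
    positivity
  -- Z ≤ 1
  have hg_int : Integrable (fun y : Evec d => gaussDensityC C 0 y) := by
    have := (integrable_gauss_quad C⁻¹ hC.inv).const_mul
      ((2 * π) ^ (-(d : ℝ) / 2) * C.det ^ (-(1 : ℝ) / 2))
    convert this using 1
    funext y; rw [hgC y]
  have hg_val : ∫ y : Evec d, gaussDensityC C 0 y = 1 := by
    have h1 : (fun y : Evec d => gaussDensityC C 0 y) =
        fun y => ((2 * π) ^ (-(d : ℝ) / 2) * C.det ^ (-(1 : ℝ) / 2)) *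
          Real.exp (-⟪y, Matrix.toEuclideanLin C⁻¹ y⟫ / 2) := by
      funext y; rw [hgC y]
    rw [h1, integral_const_mul, integral_gauss_quad C⁻¹ hC.inv]
    have hdetCinv : (C⁻¹).det = C.det⁻¹ := by
      rw [Matrix.det_nonsing_inv, Ring.inverse_eq_inv']
    rw [hdetCinv, inv_rpow_neg_half hdetC]
    rw [show ((2 * π) ^ (-(d : ℝ) / 2) * C.det ^ (-(1 : ℝ) / 2)) *
        ((2 * π) ^ ((d : ℝ) / 2) * C.det ^ ((1 : ℝ) / 2))
        = ((2 * π) ^ (-(d : ℝ) / 2) * (2 * π) ^ ((d : ℝ) / 2)) *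
          (C.det ^ (-(1 : ℝ) / 2) * C.det ^ ((1 : ℝ) / 2)) by ring]
    rw [← Real.rpow_add (by positivity), ← Real.rpow_add hdetC,
      show (-(d:ℝ)/2 + (d:ℝ)/2) = 0 by ring, show (-(1:ℝ)/2 + (1:ℝ)/2) = 0 by ring,
      Real.rpow_zero, Real.rpow_zero, mul_one]
  have hZ1 : Z ≤ 1 := by
    rw [hZ]
    calc (∫ y : Evec d, gaussDensityC C 0 y * Real.exp (-Ψ y))
        ≤ ∫ y : Evec d, gaussDensityC C 0 y := by
          refine integral_mono_of_nonneg (Filter.Eventually.of_forall fun y => ?_) hg_int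
            (Filter.Eventually.of_forall fun y => ?_)
          · exact mul_nonneg (hgCpos y).le (Real.exp_pos _).le
          · exact mul_le_of_le_one_right (hgCpos y).le
              (Real.exp_le_one_iff.mpr (by linarith [hΨnn y]))
      _ = 1 := hg_val
  -- matrix algebra
  have hCU : IsUnit C.det := hdetC.ne'.isUnit
  have hMU : IsUnit M.det := hdetM.ne'.isUnit
  have hMinv : (C * M⁻¹)⁻¹ = C⁻¹ + L • 1 := by
    rw [Matrix.mul_inv_rev, Matrix.nonsing_inv_nonsing_inv _ hMU, hMdef, Matrix.add_mul,
      Matrix.one_mul, Matrix.smul_mul, Matrix.mul_nonsing_inv _ hCU]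
  have hdetCM : (C * M⁻¹).det = C.det * M.det⁻¹ := by
    rw [Matrix.det_mul, Matrix.det_nonsing_inv, Ring.inverse_eq_inv']
  have hquad : ⟪x, Matrix.toEuclideanLin (C⁻¹ + L • 1) x⟫
      = ⟪x, Matrix.toEuclideanLin C⁻¹ x⟫ + L * ‖x‖ ^ 2 := by
    have hone : Matrix.toEuclideanLin (1 : Matrix (Fin d) (Fin d) ℝ) x = x := by
      ext j; simp [Matrix.toEuclideanLin_apply]
    rw [map_add, _root_.map_smul, LinearMap.add_apply, LinearMap.smul_apply, hone,
      inner_add_right, real_inner_smul_right, real_inner_self_eq_norm_sq]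
  have hNval : gaussDensityC (C * M⁻¹) 0 x =
      M.det ^ ((1 : ℝ) / 2) * (gaussDensityC C 0 x * Real.exp (-(L * ‖x‖ ^ 2) / 2)) := by
    simp only [gaussDensityC, sub_zero]
    rw [hMinv, hdetCM, hquad,
      Real.mul_rpow hdetC.le (inv_nonneg.mpr hdetM.le), inv_rpow_neg_half hdetM]
    rw [show -(⟪x, Matrix.toEuclideanLin C⁻¹ x⟫ + L * ‖x‖ ^ 2) / 2
        = -⟪x, Matrix.toEuclideanLin C⁻¹ x⟫ / 2 + -(L * ‖x‖ ^ 2) / 2 by ring,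
      Real.exp_add]
    ring
  -- conclude
  rcases le_or_gt Z 0 with hZ0 | hZ0
  · have hden : Z⁻¹ * (gaussDensityC C 0 x * Real.exp (-Ψ x)) ≤ 0 :=
      mul_nonpos_of_nonpos_of_nonneg (inv_nonpos.mpr hZ0)
        (mul_nonneg (hgCpos x).le (Real.exp_pos _).le)
    have hnum : 0 ≤ gaussDensityC (C * M⁻¹) 0 x := by
      rw [hNval]
      exact mul_nonneg (Real.rpow_nonneg hdetM.le _)
        (mul_nonneg (hgCpos x).le (Real.exp_pos _).le)
    exact le_trans (div_nonpos_iff.mpr (Or.inl ⟨hnum, hden⟩))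
      (Real.rpow_nonneg hdetM.le _)
  · have hdenpos : 0 < Z⁻¹ * (gaussDensityC C 0 x * Real.exp (-Ψ x)) :=
      mul_pos (inv_pos.mpr hZ0) (mul_pos (hgCpos x) (Real.exp_pos _))
    rw [div_le_iff₀ hdenpos, hNval]
    have hinv : (1 : ℝ) ≤ Z⁻¹ := by
      rw [le_inv_comm₀ one_pos hZ0]
      simpa using hZ1
    have hexp : Real.exp (-(L * ‖x‖ ^ 2) / 2) ≤ Real.exp (-Ψ x) := by
      apply Real.exp_le_exp.mpr
      have := hΨle x
      linarith
    have h1 : gaussDensityC C 0 x * Real.exp (-(L * ‖x‖ ^ 2) / 2)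
        ≤ Z⁻¹ * (gaussDensityC C 0 x * Real.exp (-Ψ x)) := by
      calc gaussDensityC C 0 x * Real.exp (-(L * ‖x‖ ^ 2) / 2)
          ≤ gaussDensityC C 0 x * Real.exp (-Ψ x) :=
            mul_le_mul_of_nonneg_left hexp (hgCpos x).le
        _ = 1 * (gaussDensityC C 0 x * Real.exp (-Ψ x)) := by ring
        _ ≤ Z⁻¹ * (gaussDensityC C 0 x * Real.exp (-Ψ x)) :=
            mul_le_mul_of_nonneg_right hinv
              (mul_nonneg (hgCpos x).le (Real.exp_pos _).le)
    exact mul_le_mul_of_nonneg_left h1 (Real.rpow_nonneg hdetM.le _)
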